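/- Inversion identity for the pseudo-inverse. Let μ be a finite nonnegative Borel measure on ℝ and let x₁ be its pseudo-inverse. Then μ((−∞, x₁(X))) + x₁(X) ≤ X for every X ∈ ℝ, and if moreover μ({x₁(X)}) = 0 then μ((−∞, x₁(X))) + x₁(X) = X. -/

import Mathlib

open MeasureTheory Filter Topology

/-- The pseudo-inverse associated to a finite measure `μ` on `ℝ`:
`x₁ X = sup {x | x' + μ((-∞,x')) < X for all x' < x}`. -/
noncomputable def pseudoInv (μ : Measure ℝ) (X : ℝ) : ℝ :=
  sSup {x : ℝ | ∀ x' < x, x' + (μ (Set.Iio x')).toReal < X}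

/-- Inversion identity for the pseudo-inverse:
`μ((-∞, x₁ X)) + x₁ X ≤ X`, with equality if `μ({x₁ X}) = 0`. -/
theorem pseudoInv_inversion (μ : Measure ℝ) [IsFiniteMeasure μ] (X : ℝ) :
    (μ (Set.Iio (pseudoInv μ X))).toReal + pseudoInv μ X ≤ X ∧
    (μ {pseudoInv μ X} = 0 →
      (μ (Set.Iio (pseudoInv μ X))).toReal + pseudoInv μ X = X) := by
  set S : Set ℝ := {x : ℝ | ∀ x' < x, x' + (μ (Set.Iio x')).toReal < X} with hS
  set L : ℝ := pseudoInv μ X with hL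
  have hLS : L = sSup S := rfl
  have hne : S.Nonempty := by
    refine ⟨X - (μ Set.univ).toReal, fun x' hx' => ?_⟩
    have h1 : (μ (Set.Iio x')).toReal ≤ (μ Set.univ).toReal :=
      ENNReal.toReal_mono (measure_ne_top μ _) (measure_mono (Set.subset_univ _))
    linarith
  have hbdd : BddAbove S := by
    refine ⟨X, fun x hx => ?_⟩
    by_contra h
    push_neg at h
    have hmid : (X + x) / 2 < x := by linarith
    have := hx _ hmid
    have h2 : (0:ℝ) ≤ (μ (Set.Iio ((X + x) / 2))).toReal := ENNReal.toReal_nonneg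
    linarith
  have hlt : ∀ x' < L, x' + (μ (Set.Iio x')).toReal < X := by
    intro x' h
    obtain ⟨s, hs, hx's⟩ := exists_lt_of_lt_csSup hne h
    exact hs x' hx's
  -- Part 1
  have hUnion : (⋃ n : ℕ, Set.Iio (L - 1 / (n + 1))) = Set.Iio L := by
    ext x
    simp only [Set.mem_iUnion, Set.mem_Iio]
    constructor
    · rintro ⟨n, hn⟩
      have : (0:ℝ) < 1 / (n + 1) := by positivity
      linarith
    · intro hx
      obtain ⟨n, hn⟩ := exists_nat_one_div_lt (show (0:ℝ) < L - x by linarith)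
      exact ⟨n, by linarith⟩
  have hmono : Monotone fun n : ℕ => Set.Iio (L - 1 / (n + 1 : ℝ)) := by
    intro m n hmn
    apply Set.Iio_subset_Iio
    have h1 : (1 : ℝ) / (n + 1) ≤ 1 / (m + 1) := by
      apply one_div_le_one_div_of_le (by positivity)
      exact_mod_cast by omega
    linarith
  have htm : Tendsto (fun n : ℕ => (μ (Set.Iio (L - 1 / (n + 1)))).toReal) atTop
      (𝓝 (μ (Set.Iio L)).toReal) := by
    have h1 := MeasureTheory.tendsto_measure_iUnion_atTop (μ := μ) hmono
    rw [hUnion] at h1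
    exact (ENNReal.tendsto_toReal (measure_ne_top μ _)).comp h1
  have htL : Tendsto (fun n : ℕ => L - 1 / (n + 1 : ℝ)) atTop (𝓝 L) := by
    have := tendsto_one_div_add_atTop_nhds_zero_nat (𝕜 := ℝ)
    simpa using tendsto_const_nhds.sub this
  have hsum : Tendsto (fun n : ℕ =>
      (L - 1 / (n + 1 : ℝ)) + (μ (Set.Iio (L - 1 / (n + 1)))).toReal) atTop
      (𝓝 (L + (μ (Set.Iio L)).toReal)) := htL.add htm
  have key : (μ (Set.Iio L)).toReal + L ≤ X := by
    have : L + (μ (Set.Iio L)).toReal ≤ X := by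
      refine le_of_tendsto' hsum fun n => le_of_lt ?_
      apply hlt
      have : (0:ℝ) < 1 / (n + 1) := by positivity
      linarith
    linarith
  refine ⟨key, fun h0 => ?_⟩
  -- Part 2
  by_contra hne'
  have hstrict : (μ (Set.Iio L)).toReal + L < X := lt_of_le_of_ne key hne'
  have hIic : μ (Set.Iic L) = μ (Set.Iio L) := by
    apply le_antisymm
    · calc μ (Set.Iic L) = μ (Set.Iio L ∪ {L}) := by rw [Set.Iio_union_right]
        _ ≤ μ (Set.Iio L) + μ {L} := measure_union_le _ _
        _ = μ (Set.Iio L) := by rw [h0, add_zero]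
    · exact measure_mono Set.Iio_subset_Iic_self
  have hInter : (⋂ n : ℕ, Set.Iio (L + 1 / (n + 1))) = Set.Iic L := by
    ext x
    simp only [Set.mem_iInter, Set.mem_Iio, Set.mem_Iic]
    constructor
    · intro h
      by_contra hx
      push_neg at hx
      obtain ⟨n, hn⟩ := exists_nat_one_div_lt (show (0:ℝ) < x - L by linarith)
      have := h n
      linarith
    · intro hx n
      have : (0:ℝ) < 1 / (n + 1) := by positivity
      linarith
  have hanti : Antitone fun n : ℕ => Set.Iio (L + 1 / (n + 1 : ℝ)) := by
    intro m n hmn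
    apply Set.Iio_subset_Iio
    have h1 : (1 : ℝ) / (n + 1) ≤ 1 / (m + 1) := by
      apply one_div_le_one_div_of_le (by positivity)
      exact_mod_cast by omega
    linarith
  have htm2 : Tendsto (fun n : ℕ => (μ (Set.Iio (L + 1 / (n + 1)))).toReal) atTop
      (𝓝 (μ (Set.Iio L)).toReal) := by
    have h1 := MeasureTheory.tendsto_measure_iInter_atTop
      (fun n : ℕ => (measurableSet_Iio (a := L + 1 / (n + 1 : ℝ))).nullMeasurableSet)
      hanti ⟨0, measure_ne_top μ _⟩
    rw [hInter, hIic] at h1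
    exact (ENNReal.tendsto_toReal (measure_ne_top μ _)).comp h1
  have htL2 : Tendsto (fun n : ℕ => L + 1 / (n + 1 : ℝ)) atTop (𝓝 L) := by
    have := tendsto_one_div_add_atTop_nhds_zero_nat (𝕜 := ℝ)
    simpa using tendsto_const_nhds.add this
  have hsum2 : Tendsto (fun n : ℕ =>
      (L + 1 / (n + 1 : ℝ)) + (μ (Set.Iio (L + 1 / (n + 1)))).toReal) atTop
      (𝓝 (L + (μ (Set.Iio L)).toReal)) := htL2.add htm2
  have hev : ∀ᶠ n : ℕ in atTop,
      (L + 1 / (n + 1 : ℝ)) + (μ (Set.Iio (L + 1 / (n + 1)))).toReal < X :=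
    hsum2.eventually_lt_const (by linarith)
  obtain ⟨n, hn⟩ := hev.exists
  have hmemS : L + 1 / (n + 1 : ℝ) ∈ S := by
    intro x' hx'
    have h1 : (μ (Set.Iio x')).toReal ≤ (μ (Set.Iio (L + 1 / (n + 1)))).toReal :=
      ENNReal.toReal_mono (measure_ne_top μ _) (measure_mono (Set.Iio_subset_Iio (le_of_lt hx')))
    linarith
  have hle : L + 1 / (n + 1 : ℝ) ≤ L := le_csSup hbdd hmemS
  have : (0:ℝ) < 1 / (n + 1) := by positivity
  linarith
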